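/- For the P_V Hamiltonian relation: if f_0+f_2 = f_1+f_3 = 2t, a_0+a_1+a_2+a_3 = 1, and the f_i satisfy the P_V system, then the function c := ω_0 - (16 h_V - t⁴ - 6t² - 1)/(8t) is constant, where ω_0 satisfies the ODE 8t² ω_0' = -(4(a_1+a_3)² - 1 + 2(3+2a_1+4a_2-2a_3)t² + 3t⁴ - 8t(a_3 f_2 + a_2 f_3)) - (4(a_1+a_3-t²) f_2 f_3 - 2t(f_2 - f_3) f_2 f_3 + f_2² f_3²); equivalently, the derivative of (16 h_V - t⁴ - 6t² - 1)/(8t) equals the stated right-hand side divided by 8t², where h_V = (1/16)(f_0 f_1 f_2 f_3 - (a_1+2a_2-a_3) f_0 f_1 - (a_1+2a_2+3a_3) f_1 f_2 + (3a_1+2a_2+a_3) f_2 f_3 - (a_1-2a_2-a_3) f_3 f_0 + 4(a_1+a_3)²). -/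

import Mathlib

/-- along solutions of the P_V system (on the domain `t ≠ 0`, with the
constraints `f_0 + f_2 = f_1 + f_3 = 2t` and `a_0 + a_1 + a_2 + a_3 = 1`), the
function `ω_0 := (16 h_V - t⁴ - 6t² - 1)/(8t)` satisfies
`8t² ω_0' = -(4(a_1+a_3)² - 1 + 2(3+2a_1+4a_2-2a_3)t² + 3t⁴ - 8t(a_3 f_2 + a_2 f_3))
 - (4(a_1+a_3-t²) f_2 f_3 - 2t(f_2 - f_3) f_2 f_3 + f_2² f_3²)`,
where `h_V` is the P_V Hamiltonian. -/
theorem pV_hamiltonian_deriv (a0 a1 a2 a3 : ℂ) (f0 f1 f2 f3 d0 d1 d2 d3 : ℂ → ℂ)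
    (hd0 : ∀ t : ℂ, t ≠ 0 → HasDerivAt f0 (d0 t) t)
    (hd1 : ∀ t : ℂ, t ≠ 0 → HasDerivAt f1 (d1 t) t)
    (hd2 : ∀ t : ℂ, t ≠ 0 → HasDerivAt f2 (d2 t) t)
    (hd3 : ∀ t : ℂ, t ≠ 0 → HasDerivAt f3 (d3 t) t)
    (hp0 : ∀ t : ℂ, t ≠ 0 →
      2 * t * d0 t = f0 t * f2 t * (f3 t - f1 t) + 4 * a0 * f2 t + 2 * (1 - 2 * a2) * f0 t)
    (hp1 : ∀ t : ℂ, t ≠ 0 →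
      2 * t * d1 t = f1 t * f3 t * (f0 t - f2 t) + 4 * a1 * f3 t + 2 * (1 - 2 * a3) * f1 t)
    (hp2 : ∀ t : ℂ, t ≠ 0 →
      2 * t * d2 t = f2 t * f0 t * (f1 t - f3 t) + 4 * a2 * f0 t + 2 * (1 - 2 * a0) * f2 t)
    (hp3 : ∀ t : ℂ, t ≠ 0 →
      2 * t * d3 t = f3 t * f1 t * (f2 t - f0 t) + 4 * a3 * f1 t + 2 * (1 - 2 * a1) * f3 t)
    (hc02 : ∀ t : ℂ, f0 t + f2 t = 2 * t)
    (hc13 : ∀ t : ℂ, f1 t + f3 t = 2 * t)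
    (ha : a0 + a1 + a2 + a3 = 1) :
    ∀ t : ℂ, t ≠ 0 →
      HasDerivAt
        (fun u =>
          (16 * ((1 / 16) * (f0 u * f1 u * f2 u * f3 u
              - (a1 + 2 * a2 - a3) * (f0 u * f1 u)
              - (a1 + 2 * a2 + 3 * a3) * (f1 u * f2 u)
              + (3 * a1 + 2 * a2 + a3) * (f2 u * f3 u)
              - (a1 - 2 * a2 - a3) * (f3 u * f0 u)
              + 4 * (a1 + a3) ^ 2))
            - u ^ 4 - 6 * u ^ 2 - 1) / (8 * u))
        ((-(4 * (a1 + a3) ^ 2 - 1 + 2 * (3 + 2 * a1 + 4 * a2 - 2 * a3) * t ^ 2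
              + 3 * t ^ 4 - 8 * t * (a3 * f2 t + a2 * f3 t))
            - (4 * (a1 + a3 - t ^ 2) * (f2 t * f3 t)
              - 2 * t * (f2 t - f3 t) * (f2 t * f3 t)
              + (f2 t) ^ 2 * (f3 t) ^ 2)) / (8 * t ^ 2)) t := by
  intro t ht
  have h0 := hd0 t ht
  have h1 := hd1 t ht
  have h2 := hd2 t ht
  have h3 := hd3 t ht
  have h2t : (2 : ℂ) * t ≠ 0 := mul_ne_zero two_ne_zero ht
  have h8t : (8 : ℂ) * t ≠ 0 := mul_ne_zero (by norm_num) ht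
  -- explicit derivative values
  have e0 : d0 t = (f0 t * f2 t * (f3 t - f1 t) + 4 * a0 * f2 t + 2 * (1 - 2 * a2) * f0 t) / (2 * t) := by
    rw [eq_div_iff h2t]; linear_combination hp0 t ht
  have e1 : d1 t = (f1 t * f3 t * (f0 t - f2 t) + 4 * a1 * f3 t + 2 * (1 - 2 * a3) * f1 t) / (2 * t) := by
    rw [eq_div_iff h2t]; linear_combination hp1 t ht
  have e2 : d2 t = (f2 t * f0 t * (f1 t - f3 t) + 4 * a2 * f0 t + 2 * (1 - 2 * a0) * f2 t) / (2 * t) := by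
    rw [eq_div_iff h2t]; linear_combination hp2 t ht
  have e3 : d3 t = (f3 t * f1 t * (f2 t - f0 t) + 4 * a3 * f1 t + 2 * (1 - 2 * a1) * f3 t) / (2 * t) := by
    rw [eq_div_iff h2t]; linear_combination hp3 t ht
  have hf0 : f0 t = 2 * t - f2 t := by linear_combination hc02 t
  have hf1 : f1 t = 2 * t - f3 t := by linear_combination hc13 t
  have ha0 : a0 = 1 - a1 - a2 - a3 := by linear_combination ha
  have h01 := h0.mul h1
  have h12 := h1.mul h2
  have h23 := h2.mul h3
  have h30 := h3.mul h0
  have h0123 := (h01.mul h2).mul h3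
  have hInner := (((((h0123.sub (h01.const_mul (a1 + 2 * a2 - a3))).sub
      (h12.const_mul (a1 + 2 * a2 + 3 * a3))).add
      (h23.const_mul (3 * a1 + 2 * a2 + a3))).sub
      (h30.const_mul (a1 - 2 * a2 - a3))).add_const (4 * (a1 + a3) ^ 2))
  have hNum := ((((hInner.const_mul ((1:ℂ)/16)).const_mul 16).sub
      (hasDerivAt_pow 4 t)).sub ((hasDerivAt_pow 2 t).const_mul 6)).sub_const 1
  have hDen : HasDerivAt (fun u : ℂ => 8 * u) 8 t := by
    simpa using (hasDerivAt_id t).const_mul (8 : ℂ)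
  have H := hNum.div hDen h8t
  refine H.congr_deriv ?_
  simp only [Pi.mul_apply, Pi.sub_apply, Pi.add_apply]
  rw [e0, e1, e2, e3, hf0, hf1, ha0]
  field_simp
  ring
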